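/- (Euler's rotation theorem) Every rotation of ℝ³ has an axis: for every 3×3 real matrix A with Aᵀ * A = 1 and det A = 1, there exists a nonzero vector v ∈ ℝ³ with A·v = v. -/

import Mathlib

open Matrix

/-- The action of a 3×3 matrix on ℝ³ by matrix–vector multiplication. -/
noncomputable def act (A : Matrix (Fin 3) (Fin 3) ℝ) (v : EuclideanSpace ℝ (Fin 3)) :
    EuclideanSpace ℝ (Fin 3) := WithLp.toLp 2 (A.mulVec v)

/-- Euler's rotation theorem: every rotation of ℝ³ (orthogonal matrix with
determinant 1) fixes some nonzero vector, its axis. -/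
theorem euler_rotation_theorem (A : Matrix (Fin 3) (Fin 3) ℝ)
    (horth : Aᵀ * A = 1) (hdet : A.det = 1) :
    ∃ v : EuclideanSpace ℝ (Fin 3), v ≠ 0 ∧ act A v = v := by
  have hdetT : Aᵀ.det = 1 := by rw [Matrix.det_transpose, hdet]
  have key : (A - 1).det = 0 := by
    have h1 : (A - 1).det = Aᵀ.det * (A - 1).det := by rw [hdetT, one_mul]
    have h2 : Aᵀ.det * (A - 1).det = (1 - A)ᵀ.det := by
      rw [← Matrix.det_mul, mul_sub, horth, mul_one, Matrix.transpose_sub,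
        Matrix.transpose_one]
    have h3 : (1 - A)ᵀ.det = -(A - 1).det := by
      rw [Matrix.det_transpose]
      have : (1 - A : Matrix (Fin 3) (Fin 3) ℝ) = (-1 : ℝ) • (A - 1) := by
        simp [neg_sub]
      rw [this, Matrix.det_smul]
      norm_num [Fintype.card_fin]
    have := h1.trans (h2.trans h3)
    linarith
  obtain ⟨v, hv, hAv⟩ := (Matrix.exists_mulVec_eq_zero_iff).mpr key
  refine ⟨WithLp.toLp 2 v, fun h => hv (by simpa using congrArg WithLp.ofLp h), ?_⟩
  have : A.mulVec v - v = 0 := by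
    have := hAv
    rwa [Matrix.sub_mulVec, Matrix.one_mulVec] at this
  show WithLp.toLp 2 (A.mulVec v) = WithLp.toLp 2 v
  exact congrArg (WithLp.toLp 2) (sub_eq_zero.mp this)
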